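/- Let ψ : [0,∞) → ℝ be twice differentiable, let U ∈ U(N) be unitary, and let A ∈ M_N(ℂ) be anti-hermitian. Then the second derivative at t = 0 of f(t) = Σ_{i,j} ψ(|(U·exp(tA))_{ij}|²) equals f''(0) = 4·Σ_{i,j} ψ''(|U_{ij}|²)·(Re[(UA)_{ij}·conj(U_{ij})])² + 2·Σ_{i,j} ψ'(|U_{ij}|²)·Re[(UA²)_{ij}·conj(U_{ij})] + 2·Σ_{i,j} ψ'(|U_{ij}|²)·|(UA)_{ij}|². -/

import Mathlib

open scoped Matrix ComplexConjugate

/-- For `ψ : [0,∞) → ℝ` twice differentiable, `U ∈ U(N)` and `A`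
anti-hermitian, the second derivative at `t = 0` of
`f(t) = ∑_{i,j} ψ(|(U·exp(tA))_{ij}|²)` equals
`4·∑ ψ''(|U_{ij}|²)·(Re[(UA)_{ij}·conj U_{ij}])² + 2·∑ ψ'(|U_{ij}|²)·Re[(UA²)_{ij}·conj U_{ij}]
 + 2·∑ ψ'(|U_{ij}|²)·|(UA)_{ij}|²`. -/
theorem stmt9 (N : ℕ) (ψ : ℝ → ℝ)
    (hψ : DifferentiableOn ℝ ψ (Set.Ici 0))
    (hψ' : DifferentiableOn ℝ (derivWithin ψ (Set.Ici 0)) (Set.Ici 0))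
    (U : Matrix (Fin N) (Fin N) ℂ) (hU : U ∈ Matrix.unitaryGroup (Fin N) ℂ)
    (A : Matrix (Fin N) (Fin N) ℂ) (hA : Aᴴ = -A) :
    HasDerivAt
      (deriv (fun t : ℝ => ∑ i, ∑ j,
        ψ (‖(U * NormedSpace.exp (t • A)) i j‖ ^ 2)))
      (4 * (∑ i, ∑ j,
          derivWithin (derivWithin ψ (Set.Ici 0)) (Set.Ici 0) (‖U i j‖ ^ 2) *
            (((U * A) i j * conj (U i j)).re) ^ 2) +
        2 * (∑ i, ∑ j,
          derivWithin ψ (Set.Ici 0) (‖U i j‖ ^ 2) *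
            ((U * A * A) i j * conj (U i j)).re) +
        2 * (∑ i, ∑ j,
          derivWithin ψ (Set.Ici 0) (‖U i j‖ ^ 2) *
            ‖(U * A) i j‖ ^ 2))
      0 := by
  clear hU hA
  letI : SeminormedRing (Matrix (Fin N) (Fin N) ℂ) := Matrix.linftyOpSemiNormedRing
  letI : NormedRing (Matrix (Fin N) (Fin N) ℂ) := Matrix.linftyOpNormedRing
  letI : NormedAlgebra ℝ (Matrix (Fin N) (Fin N) ℂ) := Matrix.linftyOpNormedAlgebra
  set M : ℝ → Matrix (Fin N) (Fin N) ℂ := fun t => U * NormedSpace.exp (t • A) with hMdef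
  -- derivative of M
  have hM : ∀ t, HasDerivAt M (M t * A) t := by
    intro t
    have h := (hasDerivAt_exp_smul_const (𝕂 := ℝ) A t).const_mul U
    rw [hMdef]; simp only [mul_assoc]; exact h
  have hM0 : M 0 = U := by simp [hMdef]
  -- entry extraction
  have hent : ∀ (i j : Fin N) (F : ℝ → Matrix (Fin N) (Fin N) ℂ)
      (B : Matrix (Fin N) (Fin N) ℂ) (t : ℝ),
      HasDerivAt F B t → HasDerivAt (fun u => F u i j) (B i j) t := fun i j F B t h =>
    (LinearMap.toContinuousLinearMap
      ((Matrix.entryLinearMap ℂ ℂ i j).restrictScalars ℝ)).hasFDerivAt.comp_hasDerivAt t h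
  have hre : ∀ (F : ℝ → ℂ) (B : ℂ) (t : ℝ), HasDerivAt F B t →
      HasDerivAt (fun u => (F u).re) B.re t := fun F B t h =>
    Complex.reCLM.hasFDerivAt.comp_hasDerivAt t h
  have him : ∀ (F : ℝ → ℂ) (B : ℂ) (t : ℝ), HasDerivAt F B t →
      HasDerivAt (fun u => (F u).im) B.im t := fun F B t h =>
    Complex.imCLM.hasFDerivAt.comp_hasDerivAt t h
  have hm : ∀ (i j : Fin N) (t : ℝ), HasDerivAt (fun u => M u i j) ((M t * A) i j) t :=
    fun i j t => hent i j _ _ t (hM t)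
  have hm1 : ∀ (i j : Fin N) (t : ℝ),
      HasDerivAt (fun u => (M u * A) i j) ((M t * A * A) i j) t :=
    fun i j t => hent i j _ _ t ((hM t).mul_const A)
  -- derivative of g i j t = |M t i j|^2
  have hg : ∀ (i j : Fin N) (t : ℝ),
      HasDerivAt (fun u => ‖M u i j‖ ^ 2)
        (2 * ((M t * A) i j * conj (M t i j)).re) t := by
    intro i j t
    have h1 := hre _ _ t (hm i j t)
    have h2 := him _ _ t (hm i j t)
    have heq : (fun u => ‖M u i j‖ ^ 2)
        = fun u => (M u i j).re * (M u i j).re + (M u i j).im * (M u i j).im := by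
      funext u; rw [Complex.sq_norm, Complex.normSq_apply]
    rw [heq]
    refine ((h1.mul h1).add (h2.mul h2)).congr_deriv ?_
    simp [Complex.mul_re, Complex.conj_re, Complex.conj_im]
    ring
  have hgmem : ∀ (i j : Fin N) (t : ℝ), ‖M t i j‖ ^ 2 ∈ Set.Ici (0:ℝ) :=
    fun i j t => Set.mem_Ici.mpr (sq_nonneg _)
  -- chain rule with boundary
  have hchain : ∀ (φ : ℝ → ℝ), DifferentiableOn ℝ φ (Set.Ici 0) →
      ∀ (g : ℝ → ℝ) (g' t : ℝ), HasDerivAt g g' t → (∀ s, g s ∈ Set.Ici 0) →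
      HasDerivAt (fun u => φ (g u)) (g' * derivWithin φ (Set.Ici 0) (g t)) t := by
    intro φ hφ g g' t hgt hmem
    exact ((hφ (g t) (hmem t)).hasDerivWithinAt).scomp_hasDerivAt t hgt hmem
  -- first derivative of f
  have hf : ∀ t, HasDerivAt (fun u : ℝ => ∑ i, ∑ j, ψ (‖M u i j‖ ^ 2))
      (∑ i, ∑ j, (2 * ((M t * A) i j * conj (M t i j)).re) *
        derivWithin ψ (Set.Ici 0) (‖M t i j‖ ^ 2)) t := by
    intro t
    exact HasDerivAt.fun_sum fun i _ => HasDerivAt.fun_sum fun j _ =>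
      hchain ψ hψ _ _ t (hg i j t) (fun s => hgmem i j s)
  have hderiv : deriv (fun t : ℝ => ∑ i, ∑ j, ψ (‖M t i j‖ ^ 2))
      = fun t => ∑ i, ∑ j, (2 * ((M t * A) i j * conj (M t i j)).re) *
        derivWithin ψ (Set.Ici 0) (‖M t i j‖ ^ 2) :=
    funext fun t => (hf t).deriv
  rw [hderiv]
  -- second derivative, termwise
  have hG : ∀ (i j : Fin N),
      HasDerivAt (fun t => 2 * ((M t * A) i j * conj (M t i j)).re)
        (2 * (((M 0 * A * A) i j * conj (M 0 i j)).re
          + ((M 0 * A) i j * conj ((M 0 * A) i j)).re)) 0 := by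
    intro i j
    have heq : (fun t => 2 * ((M t * A) i j * conj (M t i j)).re)
        = fun t => 2 * (((M t * A) i j).re * (M t i j).re
            + ((M t * A) i j).im * (M t i j).im) := by
      funext t; simp [Complex.mul_re, Complex.conj_re, Complex.conj_im]
    rw [heq]
    have h1 := (hre _ _ 0 (hm1 i j 0)).mul (hre _ _ 0 (hm i j 0))
    have h2 := (him _ _ 0 (hm1 i j 0)).mul (him _ _ 0 (hm i j 0))
    have := ((h1.add h2).const_mul (2:ℝ))
    refine this.congr_deriv ?_
    simp [Complex.mul_re, Complex.conj_re, Complex.conj_im]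
    ring
  have hP : ∀ (i j : Fin N),
      HasDerivAt (fun t => derivWithin ψ (Set.Ici 0) (‖M t i j‖ ^ 2))
        ((2 * ((M 0 * A) i j * conj (M 0 i j)).re) *
          derivWithin (derivWithin ψ (Set.Ici 0)) (Set.Ici 0) (‖M 0 i j‖ ^ 2)) 0 :=
    fun i j => hchain _ hψ' _ _ 0 (hg i j 0) (fun s => hgmem i j s)
  have key := HasDerivAt.fun_sum (u := Finset.univ) fun i (_ : i ∈ Finset.univ) =>
    HasDerivAt.fun_sum (u := Finset.univ) fun j (_ : j ∈ Finset.univ) => (hG i j).mul (hP i j)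
  refine key.congr_deriv ?_
  symm
  rw [hM0]
  simp only [Finset.mul_sum]
  rw [← Finset.sum_add_distrib, ← Finset.sum_add_distrib]
  refine Finset.sum_congr rfl fun i _ => ?_
  rw [← Finset.sum_add_distrib, ← Finset.sum_add_distrib]
  refine Finset.sum_congr rfl fun j _ => ?_
  have habs : ((U * A) i j * conj ((U * A) i j)).re = ‖(U * A) i j‖ ^ 2 := by
    rw [Complex.mul_conj, Complex.ofReal_re, Complex.normSq_eq_norm_sq]
  rw [habs]
  ring
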